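/- If β = (2τ+1)π/2^{n+1} + 2τ'π/2^n for integers τ, τ' and n ≥ 0, then |sin(2^n β)| = 1 and |sin β| ≥ sin(π/2^{n+1}); consequently |sin β · sin(2^n β)| ≥ sin(π/2^{n+1}). -/
import Mathlib


open Real

theorem sin_bounds_of_special_angle (n : ℕ) (τ τ' : ℤ)
    (β : ℝ) (hβ : β = (2 * τ + 1) * π / 2 ^ (n + 1) + 2 * τ' * π / 2 ^ n) :
    |Real.sin ((2 : ℝ) ^ n * β)| = 1 ∧
    Real.sin (π / 2 ^ (n + 1)) ≤ |Real.sin β| ∧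
    Real.sin (π / 2 ^ (n + 1)) ≤ |Real.sin β * Real.sin ((2 : ℝ) ^ n * β)| := by
  set x : ℝ := π / 2 ^ (n + 1) with hx
  set m : ℤ := 2 * τ + 1 + 4 * τ' with hm
  have hpow : (2 : ℝ) ^ (n + 1) ≠ 0 := by positivity
  have hβ' : β = (m : ℝ) * x := by
    rw [hβ, hm, hx]
    push_cast
    field_simp
    ring
  -- First part: sin (2^n β) = ± 1
  have h2nβ : (2 : ℝ) ^ n * β = (τ + 2 * τ') * π + π / 2 := by
    rw [hβ]
    push_cast
    field_simp
    ring
  have h1 : |Real.sin ((2 : ℝ) ^ n * β)| = 1 := by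
    have : Real.sin ((2 : ℝ) ^ n * β) = Real.cos ((τ + 2 * τ' : ℤ) * π) := by
      rw [h2nβ, Real.sin_add]
      push_cast
      simp
    rw [this, Real.abs_cos_int_mul_pi]
  -- Second part
  have hxpos : 0 < x := by rw [hx]; positivity
  have hxle : x ≤ π / 2 := by
    rw [hx]
    apply div_le_div_of_nonneg_left Real.pi_pos.le (by norm_num)
    calc (2:ℝ) = 2^1 := by norm_num
    _ ≤ 2 ^ (n+1) := by
        apply pow_le_pow_right₀ (by norm_num) (by omega)
  set q : ℤ := m / 2 ^ (n + 1) with hq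
  set r : ℤ := m % 2 ^ (n + 1) with hr
  have hmr : m = 2 ^ (n + 1) * q + r := (Int.mul_ediv_add_emod m _).symm
  have hr0 : 0 ≤ r := Int.emod_nonneg m (by positivity)
  have hrlt : r < 2 ^ (n + 1) := Int.emod_lt_of_pos m (by positivity)
  have hrodd : Odd r := by
    have hmodd : Odd m := by rw [hm]; exact ⟨τ + 2*τ', by ring⟩
    rcases hmodd with ⟨k, hk⟩
    rcases Int.even_or_odd r with he | ho
    · exfalso
      rcases he with ⟨j, hj⟩
      have : (2:ℤ) ∣ 2 * k + 1 := by
        rw [← hk, hmr, hj]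
        exact ⟨2 ^ n * q + j, by ring⟩
      omega
    · exact ho
  have hr1 : 1 ≤ r := by
    rcases hrodd with ⟨k, hk⟩; omega
  have hrle : r ≤ 2 ^ (n + 1) - 1 := by omega
  have hβ2 : β = (r : ℝ) * x + q * π := by
    rw [hβ', hmr]
    push_cast
    have h2x : (2 : ℝ) ^ (n + 1) * x = π := by
      rw [hx]; field_simp
    rw [add_mul, mul_assoc]
    rw [mul_comm (q:ℝ) x, ← mul_assoc, h2x]
    ring
  have habs : |Real.sin β| = |Real.sin ((r : ℝ) * x)| := by
    have hone : |((-1:ℝ)) ^ q| = 1 := by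
      rcases Int.even_or_odd q with h | h
      · rw [h.neg_one_zpow]; norm_num
      · rw [h.neg_one_zpow]; norm_num
    rw [hβ2, Real.sin_add_int_mul_pi, abs_mul, hone, one_mul]
  have hrx_pos : 0 < (r : ℝ) * x := by
    apply mul_pos _ hxpos
    exact_mod_cast hr1
  have hrx_le : (r : ℝ) * x ≤ π - x := by
    have : (r : ℝ) ≤ 2 ^ (n + 1) - 1 := by exact_mod_cast hrle
    have h2x : (2 : ℝ) ^ (n + 1) * x = π := by rw [hx]; field_simp
    nlinarith
  have hx_le_rx : x ≤ (r : ℝ) * x := by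
    nlinarith [show (1:ℝ) ≤ (r:ℝ) from by exact_mod_cast hr1]
  have hsin_le : Real.sin x ≤ Real.sin ((r : ℝ) * x) := by
    rcases le_or_gt ((r : ℝ) * x) (π / 2) with h | h
    · exact Real.sin_le_sin_of_le_of_le_pi_div_two (by linarith [hxpos]) h hx_le_rx
    · have := Real.sin_pi_sub ((r : ℝ) * x)
      rw [← this]
      apply Real.sin_le_sin_of_le_of_le_pi_div_two (by linarith [hxpos]) (by linarith)
      linarith
  have hsinr_nonneg : 0 ≤ Real.sin ((r : ℝ) * x) := by
    apply Real.sin_nonneg_of_nonneg_of_le_pi hrx_pos.le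
    linarith [hxpos]
  have h2 : Real.sin x ≤ |Real.sin β| := by
    rw [habs, abs_of_nonneg hsinr_nonneg]
    exact hsin_le
  refine ⟨h1, h2, ?_⟩
  rw [abs_mul, h1, mul_one]
  exact h2
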